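/- Let n and d be positive integers, let φ : ℤ_{≥0} → ℕ be any function, and let I ⊆ V be a homogeneous ideal with dim_ℂ (V/I)_a = φ(a) for all a ≥ 0. Then Υ(I) is a ℤ^d-homogeneous ideal of S and dim_ℂ (S/Υ(I))_u = φ(|u|) for all u ∈ ℤ^d_{≥0}. -/

import Mathlib

/-!
Common setup, following the paper "On the abundance of minimal border rank symmetric
tensors verifying Comon's conjecture".

* `S = ℂ[α_{i,j} : 1 ≤ i ≤ d, 1 ≤ j ≤ n]` is modeled as `MvPolynomial (Fin d × Fin n) ℂ`,
  with the `ℤ^d`-grading in which `deg α_{i,j} = e_i`; `Scomp n d u` is the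
  multidegree-`u` component (`u : Fin d → ℕ`).
* `V = ℂ[β_1,…,β_n]` is modeled as `MvPolynomial (Fin n) ℂ` with its standard grading;
  `Vcomp n N` is the degree-`N` component.
* The graded duals `T` and `P` are modeled by the same polynomial rings, with `S`
  (resp. `V`) acting by differentiation (`apolar`); `ann F` is the apolar
  (annihilator) ideal of `F`.
* A tensor `F ∈ (ℂ^n)^{⊗d}` is an element of the multidegree-`(1,…,1)` component
  `Scomp n d (fun _ => 1)` (a multilinear form in the `x_{i,j}`).
-/

open MvPolynomial Submodule Module

noncomputable section

namespace BorderComon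

/-- the multidegree-`u` graded component of `S`. -/
def Scomp (n d : ℕ) (u : Fin d → ℕ) : Submodule ℂ (MvPolynomial (Fin d × Fin n) ℂ) :=
  weightedHomogeneousSubmodule ℂ (fun p : Fin d × Fin n => Pi.single p.1 1) u

/-- the degree-`N` graded component of `V`. -/
def Vcomp (n : ℕ) (N : ℕ) : Submodule ℂ (MvPolynomial (Fin n) ℂ) :=
  homogeneousSubmodule (Fin n) ℂ N

/-- the diagonal ring map `π : S → V`, `α_{i,j} ↦ β_j`. -/
def piAlg (n d : ℕ) : MvPolynomial (Fin d × Fin n) ℂ →ₐ[ℂ] MvPolynomial (Fin n) ℂ :=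
  aeval (fun p : Fin d × Fin n => X p.2)

/-- `π` as a `ℂ`-linear map. -/
def piL (n d : ℕ) : MvPolynomial (Fin d × Fin n) ℂ →ₗ[ℂ] MvPolynomial (Fin n) ℂ :=
  (piAlg n d).toLinearMap

/-- the ring map `ρ : S → V`, `α_{1,j} ↦ β_j` and `α_{i,j} ↦ 0` for `i ≥ 2`
(rows are `0`-indexed, so the first row is row `0`). -/
def rho (n d : ℕ) : MvPolynomial (Fin d × Fin n) ℂ →ₐ[ℂ] MvPolynomial (Fin n) ℂ :=
  aeval (fun p : Fin d × Fin n => if (p.1 : ℕ) = 0 then X p.2 else 0)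

/-- the result of differentiating `F` by the monomial `X^a`:
`∂^a X^b = (∏_i b_i!/(b_i-a_i)!) X^{b-a}` (and `= 0` unless `a ≤ b`, which is
automatic since the descending factorial vanishes there). -/
def diffMon {σ : Type*} (a : σ →₀ ℕ) (F : MvPolynomial σ ℂ) : MvPolynomial σ ℂ :=
  ∑ b ∈ F.support, (F.coeff b * ∏ i ∈ a.support, ((b i).descFactorial (a i) : ℂ)) •
    monomial (b - a) (1 : ℂ)

/-- the apolarity action: `apolar F ψ = ψ ∘ F` is the result of letting `ψ` act on `F`
by differentiation, linearly in `ψ`. -/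
def apolar {σ : Type*} (F : MvPolynomial σ ℂ) : MvPolynomial σ ℂ →ₗ[ℂ] MvPolynomial σ ℂ :=
  Finsupp.lsum ℂ (fun a : σ →₀ ℕ => LinearMap.toSpanSingleton ℂ _ (diffMon a F)) ∘ₗ
    (AddMonoidAlgebra.coeffLinearEquiv ℂ).toLinearMap

/-- the apolar (annihilator) ideal `Ann(F) = {ψ : ψ ∘ F = 0}`, as a subspace. -/
def ann {σ : Type*} (F : MvPolynomial σ ℂ) : Submodule ℂ (MvPolynomial σ ℂ) :=
  LinearMap.ker (apolar F)

/-- the ideal `I_R ⊆ S` generated by the `2×2` minors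
`α_{i,j} α_{k,ℓ} − α_{i,ℓ} α_{k,j}`, `i < k`, `j < ℓ`. -/
def IR (n d : ℕ) : Ideal (MvPolynomial (Fin d × Fin n) ℂ) :=
  Ideal.span {q | ∃ i k : Fin d, ∃ j l : Fin n, i < k ∧ j < l ∧
    q = X (i, j) * X (k, l) - X (i, l) * X (k, j)}

/-- `J ⊆ S` is a (multigraded) homogeneous ideal: it is the sum of its
multigraded components. -/
def IsHomogS (n d : ℕ) (J : Ideal (MvPolynomial (Fin d × Fin n) ℂ)) : Prop :=
  Submodule.restrictScalars ℂ J = ⨆ u : Fin d → ℕ, (Submodule.restrictScalars ℂ J ⊓ Scomp n d u)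

/-- `I ⊆ V` is a homogeneous ideal: it is the sum of its graded components. -/
def IsHomogV (n : ℕ) (I : Ideal (MvPolynomial (Fin n) ℂ)) : Prop :=
  Submodule.restrictScalars ℂ I = ⨆ N : ℕ, (Submodule.restrictScalars ℂ I ⊓ Vcomp n N)

/-- the exponent redistribution underlying `ψ_u`: in the sorted list
`i_1 ≤ ⋯ ≤ i_N` of the indices of the monomial `β^γ` (value `j` occurring `γ j`
times, `N = |γ|`), row `i` receives the block of positions
`[∑_{i'<i} u i', ∑_{i'≤i} u i')`, while value `j` occupies positions
`[∑_{j'<j} γ j', ∑_{j'≤j} γ j')`; hence the exponent of `α_{i,j}` is the size of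
the intersection of these two intervals. -/
def distrib (n d : ℕ) (u : Fin d → ℕ) (γ : Fin n →₀ ℕ) : (Fin d × Fin n) →₀ ℕ :=
  Finsupp.equivFunOnFinite.symm fun p : Fin d × Fin n =>
    min (∑ i ∈ Finset.univ.filter fun i : Fin d => (i : ℕ) ≤ (p.1 : ℕ), u i)
        (∑ j ∈ Finset.univ.filter fun j : Fin n => (j : ℕ) ≤ (p.2 : ℕ), γ j)
    - max (∑ i ∈ Finset.univ.filter fun i : Fin d => (i : ℕ) < (p.1 : ℕ), u i)
          (∑ j ∈ Finset.univ.filter fun j : Fin n => (j : ℕ) < (p.2 : ℕ), γ j)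

/-- the linear map `ψ_u : V → S` sending a monomial `β_{i_1} β_{i_2} ⋯ β_{i_N}`
with `i_1 ≤ i_2 ≤ ⋯ ≤ i_N` to
`(α_{1,i_1} ⋯ α_{1,i_{u_1}}) (α_{2,i_{u_1+1}} ⋯ α_{2,i_{u_1+u_2}}) ⋯`.
(Its restriction to `Vcomp n (∑ i, u i)` is the map `ψ_u : V_{|u|} → S_u` of the
paper.) -/
def psi (n d : ℕ) (u : Fin d → ℕ) :
    MvPolynomial (Fin n) ℂ →ₗ[ℂ] MvPolynomial (Fin d × Fin n) ℂ :=
  (AddMonoidAlgebra.coeffLinearEquiv ℂ).symm.toLinearMap ∘ₗ Finsupp.lmapDomain ℂ ℂ (distrib n d u) ∘ₗ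
    (AddMonoidAlgebra.coeffLinearEquiv ℂ).toLinearMap

/-- `Υ(I) = I_R + ∑_{u} ψ_u(I_{|u|}) ⊆ S`. -/
def Upsilon (n d : ℕ) (I : Ideal (MvPolynomial (Fin n) ℂ)) :
    Submodule ℂ (MvPolynomial (Fin d × Fin n) ℂ) :=
  restrictScalars ℂ (IR n d) ⊔
    ⨆ u : Fin d → ℕ, Submodule.map (psi n d u) (restrictScalars ℂ I ⊓ Vcomp n (∑ i, u i))

/-- the irrelevant ideal `B_X = ∏_{i=1}^d (α_{i,1},…,α_{i,n}) ⊆ S`. -/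
def BX (n d : ℕ) : Ideal (MvPolynomial (Fin d × Fin n) ℂ) :=
  ∏ i : Fin d, Ideal.span (Set.range fun j : Fin n => X (i, j))

/-- the irrelevant ideal `B_Y = (β_1,…,β_n) ⊆ V`. -/
def BY (n : ℕ) : Ideal (MvPolynomial (Fin n) ℂ) :=
  Ideal.span (Set.range X)

/-- `Σ(J) = ⊕_{a ≥ 0} ⊕_{s ∈ ℰ} π(J_{a𝟏+s}) ⊆ V`, where
`ℰ = {0, e_1, e_1+e_2, …, e_1+⋯+e_{d-1}}` (the element `s` with `m` ones is
`fun i => if i < m then 1 else 0`). -/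
def SigmaMap (n d : ℕ) (J : Ideal (MvPolynomial (Fin d × Fin n) ℂ)) :
    Submodule ℂ (MvPolynomial (Fin n) ℂ) :=
  ⨆ a : ℕ, ⨆ m : Fin d, Submodule.map (piL n d)
    (restrictScalars ℂ J ⊓ Scomp n d (fun i => a + if (i : ℕ) < (m : ℕ) then 1 else 0))

/-- the set of tensors of rank at most `r`: sums of `r` decomposable tensors
`v_1 ⊗ ⋯ ⊗ v_d = ∏_i (∑_j v_i(j) x_{i,j})`. -/
def rankLE (n d r : ℕ) : Set (MvPolynomial (Fin d × Fin n) ℂ) :=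
  {F | ∃ v : Fin r → Fin d → Fin n → ℂ,
    F = ∑ s : Fin r, ∏ i : Fin d, ∑ j : Fin n, C (v s i j) * X (i, j)}

/-- `F` has border rank at most `r`: coefficientwise (finitely many coefficients are
involved), `F` lies in the closure of the set of tensors of rank at most `r`. -/
def brkLE (n d : ℕ) (F : MvPolynomial (Fin d × Fin n) ℂ) (r : ℕ) : Prop :=
  (fun m => coeff m F) ∈ closure ((fun G => fun m => coeff m G) '' rankLE n d r)

/-- the border rank of a tensor. -/
def brk (n d : ℕ) (F : MvPolynomial (Fin d × Fin n) ℂ) : ℕ :=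
  sInf {r | brkLE n d F r}

/-- polynomials that are sums of `r` `d`-th powers of linear forms. -/
def srankLE (n d r : ℕ) : Set (MvPolynomial (Fin n) ℂ) :=
  {p | ∃ c : Fin r → Fin n → ℂ, p = ∑ s : Fin r, (∑ j : Fin n, C (c s j) * X j) ^ d}

/-- `p` has symmetric border rank at most `r`. -/
def sbrkLE (n d : ℕ) (p : MvPolynomial (Fin n) ℂ) (r : ℕ) : Prop :=
  (fun m => coeff m p) ∈ closure ((fun q => fun m => coeff m q) '' srankLE n d r)

/-- the symmetric border rank of a degree-`d` form. -/
def sbrk (n d : ℕ) (p : MvPolynomial (Fin n) ℂ) : ℕ :=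
  sInf {r | sbrkLE n d p r}

/-- `F` is a symmetric tensor: invariant under the permutations of the `d` factors. -/
def IsSymm (n d : ℕ) (F : MvPolynomial (Fin d × Fin n) ℂ) : Prop :=
  ∀ τ : Equiv.Perm (Fin d), rename (Prod.map τ id) F = F

/-- the degree-`d` polynomial `p_F` corresponding to a symmetric tensor `F`, obtained
by identifying all the rows of variables (`x_{i,j} ↦ y_j`); `F` is the polarization
of `p_F`. -/
def pF (n d : ℕ) (F : MvPolynomial (Fin d × Fin n) ℂ) : MvPolynomial (Fin n) ℂ :=
  rename Prod.snd F

/-- `F` is concise: the contraction `(ℂ^n)^* → (ℂ^n)^{⊗(d-1)}` of the first tensor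
factor, `w ↦ F(x_{1,j} := w_j)`, is injective. -/
def Concise (n d : ℕ) (F : MvPolynomial (Fin d × Fin n) ℂ) : Prop :=
  Function.Injective fun w : Fin n → ℂ =>
    aeval (fun p : Fin d × Fin n => if (p.1 : ℕ) = 0 then C (w p.2) else X p) F

/-- the ideal `∑_{0<u<𝟏} S·Ann(F)_u` generated by the components `Ann(F)_u`,
`0 < u < 𝟏` (componentwise). -/
def midIdeal (n d : ℕ) (F : MvPolynomial (Fin d × Fin n) ℂ) :
    Ideal (MvPolynomial (Fin d × Fin n) ℂ) :=
  Ideal.span (⋃ u ∈ {u : Fin d → ℕ | 0 < u ∧ u < fun _ => 1},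
    ((ann F ⊓ Scomp n d u : Submodule ℂ (MvPolynomial (Fin d × Fin n) ℂ)) :
      Set (MvPolynomial (Fin d × Fin n) ℂ)))

/-- `F` is a *sharp* tensor:
(1) `Ann(F)` has exactly `n-1` minimal generators of multidegree `𝟏`;
(2) `dim (S/Ann F)_u = n` for all `0 < u < 𝟏`;
(3) `dim (S/(Ann(F)_{e_i+e_j}))_{s e_i + e_j} = n` for all `i ≠ j`, `1 ≤ s ≤ d-1`. -/
def Sharp (n d : ℕ) (F : MvPolynomial (Fin d × Fin n) ℂ) : Prop :=
  (finrank ℂ (ann F ⊓ Scomp n d fun _ => 1 :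
        Submodule ℂ (MvPolynomial (Fin d × Fin n) ℂ)) -
      finrank ℂ (restrictScalars ℂ (midIdeal n d F) ⊓ Scomp n d fun _ => 1 :
        Submodule ℂ (MvPolynomial (Fin d × Fin n) ℂ)) = n - 1) ∧
  (∀ u : Fin d → ℕ, 0 < u → u < (fun _ => 1) →
    finrank ℂ (Scomp n d u ⧸ Submodule.comap (Scomp n d u).subtype (ann F)) = n) ∧
  (∀ i j : Fin d, i ≠ j → ∀ s : ℕ, 1 ≤ s → s ≤ d - 1 →
    finrank ℂ (Scomp n d (Pi.single i s + Pi.single j 1) ⧸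
      Submodule.comap (Scomp n d (Pi.single i s + Pi.single j 1)).subtype
        (restrictScalars ℂ (Ideal.span
          ((ann F ⊓ Scomp n d (Pi.single i 1 + Pi.single j 1) :
            Submodule ℂ (MvPolynomial (Fin d × Fin n) ℂ)) :
            Set (MvPolynomial (Fin d × Fin n) ℂ))))) = n)


def pref {k : ℕ} (f : Fin k → ℕ) (m : ℕ) : ℕ :=
  ∑ i ∈ Finset.univ.filter (fun i : Fin k => (i : ℕ) < m), f i

lemma pref_mono {k : ℕ} (f : Fin k → ℕ) {m m' : ℕ} (h : m ≤ m') : pref f m ≤ pref f m' := by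
  apply Finset.sum_le_sum_of_subset
  intro i hi
  simp only [Finset.mem_filter, Finset.mem_univ, true_and] at hi ⊢
  omega

lemma pref_zero {k : ℕ} (f : Fin k → ℕ) : pref f 0 = 0 := by
  simp [pref]

lemma pref_ge {k : ℕ} (f : Fin k → ℕ) {m : ℕ} (h : k ≤ m) : pref f m = ∑ i, f i := by
  unfold pref
  congr 1
  rw [Finset.filter_true_of_mem]
  intro i _
  exact lt_of_lt_of_le i.isLt h

lemma pref_succ {k : ℕ} (f : Fin k → ℕ) (i : Fin k) :
    pref f ((i : ℕ) + 1) = pref f (i : ℕ) + f i := by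
  unfold pref
  rw [show Finset.univ.filter (fun j : Fin k => (j : ℕ) < (i : ℕ) + 1)
      = insert i (Finset.univ.filter (fun j : Fin k => (j : ℕ) < (i : ℕ))) by
    ext j
    simp only [Finset.mem_filter, Finset.mem_univ, true_and, Finset.mem_insert, Fin.ext_iff]
    omega]
  rw [Finset.sum_insert (by simp)]
  ring

lemma distrib_apply {n d : ℕ} (u : Fin d → ℕ) (γ : Fin n →₀ ℕ) (p : Fin d × Fin n) :
    distrib n d u γ p =
      ((Finset.Ico (pref u p.1) (pref u ((p.1 : ℕ) + 1))) ∩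
        (Finset.Ico (pref ⇑γ p.2) (pref ⇑γ ((p.2 : ℕ) + 1)))).card := by
  rw [Finset.Ico_inter_Ico, Nat.card_Ico]
  simp only [distrib, Finsupp.coe_equivFunOnFinite_symm]
  have key : ∀ {k : ℕ} (f : Fin k → ℕ) (i : Fin k),
      (∑ x ∈ Finset.univ.filter fun x : Fin k => (x : ℕ) ≤ (i : ℕ), f x) = pref f ((i : ℕ) + 1) := by
    intro k f i
    unfold pref
    apply Finset.sum_congr _ (fun _ _ => rfl)
    ext x
    simp [Nat.lt_succ_iff]
  rw [key, key]
  rfl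

lemma sum_card_inter (A : Finset ℕ) {k : ℕ} (g : Fin k → ℕ) (hA : ∀ x ∈ A, x < pref g k) :
    ∑ j : Fin k, (A ∩ Finset.Ico (pref g (j : ℕ)) (pref g ((j : ℕ) + 1))).card = A.card := by
  classical
  rw [← Finset.card_biUnion]
  · congr 1
    apply Finset.Subset.antisymm
    · intro x hx
      simp only [Finset.mem_biUnion, Finset.mem_inter] at hx
      obtain ⟨j, _, hj, _⟩ := hx
      exact hj
    · intro x hx
      have hxk := hA x hx
      have hk : 0 < k := by
        by_contra h
        push_neg at h
        interval_cases k
        simp [pref_zero] at hxk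
      have hex : ∃ m, x < pref g (m + 1) := ⟨k - 1, by rwa [show k - 1 + 1 = k by omega]⟩
      set j0 := Nat.find hex with hj0
      have hj0k : j0 < k := by
        have : j0 ≤ k - 1 := Nat.find_le (by rwa [show k - 1 + 1 = k by omega])
        omega
      have hlow : pref g j0 ≤ x := by
        rcases Nat.eq_zero_or_pos j0 with h0 | h0
        · rw [h0, pref_zero]; exact Nat.zero_le x
        · have := Nat.find_min hex (m := j0 - 1) (by omega)
          push_neg at this
          rwa [show j0 - 1 + 1 = j0 by omega] at this
      simp only [Finset.mem_biUnion]
      exact ⟨⟨j0, hj0k⟩, Finset.mem_univ _, Finset.mem_inter.2 ⟨hx,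
        Finset.mem_Ico.2 ⟨hlow, Nat.find_spec hex⟩⟩⟩
  · intro i _ j _ hij
    apply Finset.disjoint_left.2
    intro x hxi hxj
    simp only [Finset.mem_inter, Finset.mem_Ico] at hxi hxj
    rcases lt_or_gt_of_ne (fun h : (i : ℕ) = (j : ℕ) => hij (Fin.ext h)) with h | h
    · exact absurd (lt_of_lt_of_le hxi.2.2 (le_trans (pref_mono g h) hxj.2.1)) (lt_irrefl x)
    · exact absurd (lt_of_lt_of_le hxj.2.2 (le_trans (pref_mono g h) hxi.2.1)) (lt_irrefl x)

lemma row_distrib {n d : ℕ} (u : Fin d → ℕ) (γ : Fin n →₀ ℕ) (hsum : ∑ i, u i = ∑ j, γ j)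
    (i : Fin d) : ∑ j, distrib n d u γ (i, j) = u i := by
  have : ∀ j : Fin n, distrib n d u γ (i, j) =
      ((Finset.Ico (pref u (i : ℕ)) (pref u ((i : ℕ) + 1))) ∩
        (Finset.Ico (pref ⇑γ (j : ℕ)) (pref ⇑γ ((j : ℕ) + 1)))).card :=
    fun j => distrib_apply u γ (i, j)
  simp only [this]
  rw [sum_card_inter _ ⇑γ, Nat.card_Ico, pref_succ]
  · omega
  · intro x hx
    rw [Finset.mem_Ico] at hx
    calc x < pref u ((i : ℕ) + 1) := hx.2
    _ ≤ pref u d := pref_mono u i.isLt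
    _ = ∑ i', u i' := pref_ge u (le_refl d)
    _ = pref ⇑γ n := by rw [hsum, pref_ge ⇑γ (le_refl n)]

lemma col_distrib {n d : ℕ} (u : Fin d → ℕ) (γ : Fin n →₀ ℕ) (hsum : ∑ i, u i = ∑ j, γ j)
    (j : Fin n) : ∑ i, distrib n d u γ (i, j) = γ j := by
  have : ∀ i : Fin d, distrib n d u γ (i, j) =
      ((Finset.Ico (pref ⇑γ (j : ℕ)) (pref ⇑γ ((j : ℕ) + 1))) ∩
        (Finset.Ico (pref u (i : ℕ)) (pref u ((i : ℕ) + 1)))).card := by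
    intro i
    rw [distrib_apply u γ (i, j), Finset.inter_comm]
  simp only [this]
  rw [sum_card_inter _ u, Nat.card_Ico, pref_succ]
  · omega
  · intro x hx
    rw [Finset.mem_Ico] at hx
    calc x < pref ⇑γ ((j : ℕ) + 1) := hx.2
    _ ≤ pref ⇑γ n := pref_mono ⇑γ j.isLt
    _ = ∑ j', γ j' := pref_ge ⇑γ (le_refl n)
    _ = pref u d := by rw [← hsum, pref_ge u (le_refl d)]

section A3
variable {n d : ℕ}

def rowF (b : (Fin d × Fin n) →₀ ℕ) : Fin d → ℕ := fun i => ∑ j, b (i, j)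

def colF (b : (Fin d × Fin n) →₀ ℕ) : Fin n →₀ ℕ :=
  Finsupp.equivFunOnFinite.symm fun j => ∑ i, b (i, j)

def Pa (b : (Fin d × Fin n) →₀ ℕ) (m m' : ℕ) : ℕ :=
  ∑ i : Fin d, ∑ j : Fin n, if (i : ℕ) < m ∧ (j : ℕ) < m' then b (i, j) else 0

lemma Pa_mono (b : (Fin d × Fin n) →₀ ℕ) {m₁ m₂ m₁' m₂' : ℕ} (h : m₁ ≤ m₂) (h' : m₁' ≤ m₂') :
    Pa b m₁ m₁' ≤ Pa b m₂ m₂' := by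
  refine Finset.sum_le_sum fun i _ => Finset.sum_le_sum fun j _ => ?_
  split_ifs <;> omega

lemma Pa_n (b : (Fin d × Fin n) →₀ ℕ) (m : ℕ) : Pa b m n = pref (rowF b) m := by
  unfold Pa pref rowF
  rw [Finset.sum_filter]
  refine Finset.sum_congr rfl fun i _ => ?_
  by_cases h : (i : ℕ) < m
  · simp [h]
  · simp [h]

lemma Pa_d (b : (Fin d × Fin n) →₀ ℕ) (m' : ℕ) : Pa b d m' = pref ⇑(colF b) m' := by
  unfold Pa pref colF
  rw [Finset.sum_comm, Finset.sum_filter]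
  refine Finset.sum_congr rfl fun j _ => ?_
  by_cases h : (j : ℕ) < m'
  · simp [h]
  · simp [h]

lemma Pa_rect (b : (Fin d × Fin n) →₀ ℕ) (i : Fin d) (j : Fin n) :
    Pa b ((i : ℕ) + 1) ((j : ℕ) + 1) + Pa b i j
      = Pa b i ((j : ℕ) + 1) + Pa b ((i : ℕ) + 1) j + b (i, j) := by
  have hb : b (i, j) = ∑ i' : Fin d, ∑ j' : Fin n,
      if (i' : ℕ) = (i : ℕ) ∧ (j' : ℕ) = (j : ℕ) then b (i', j') else 0 := by
    simp [Fin.val_inj, ite_and, Finset.sum_ite_eq']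
  rw [hb]
  unfold Pa
  simp only [← Finset.sum_add_distrib]
  refine Finset.sum_congr rfl fun i' _ => Finset.sum_congr rfl fun j' _ => ?_
  split_ifs <;> omega

lemma Pa_eq_min {b : (Fin d × Fin n) →₀ ℕ}
    (hb : ∀ p q : Fin d × Fin n, (p.1 : ℕ) < (q.1 : ℕ) → (q.2 : ℕ) < (p.2 : ℕ) →
      b p = 0 ∨ b q = 0) (m m' : ℕ) :
    Pa b m m' = min (Pa b m n) (Pa b d m') := by
  have le1 : Pa b m m' ≤ Pa b m n := by
    refine Finset.sum_le_sum fun i _ => Finset.sum_le_sum fun j _ => ?_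
    have hj := j.isLt
    split_ifs <;> omega
  have le2 : Pa b m m' ≤ Pa b d m' := by
    refine Finset.sum_le_sum fun i _ => Finset.sum_le_sum fun j _ => ?_
    have hi := i.isLt
    split_ifs <;> omega
  by_cases hc : ∃ p : Fin d × Fin n, (p.1 : ℕ) < m ∧ m' ≤ (p.2 : ℕ) ∧ b p ≠ 0
  · obtain ⟨p, hp1, hp2, hp3⟩ := hc
    have heq : Pa b d m' = Pa b m m' := by
      refine Finset.sum_congr rfl fun i _ => Finset.sum_congr rfl fun j _ => ?_
      have hi := i.isLt
      by_cases h1 : (i : ℕ) < m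
      · split_ifs <;> omega
      · by_cases h2 : (j : ℕ) < m'
        · have hz : b (i, j) = 0 := by
            rcases hb p (i, j) (show (p.1 : ℕ) < (i : ℕ) by omega) (show (j : ℕ) < (p.2 : ℕ) by omega) with h | h
            · exact absurd h hp3
            · exact h
          split_ifs <;> simp [hz]
        · split_ifs <;> omega
    omega
  · push_neg at hc
    have heq : Pa b m n = Pa b m m' := by
      refine Finset.sum_congr rfl fun i _ => Finset.sum_congr rfl fun j _ => ?_
      have hj := j.isLt
      by_cases h1 : (i : ℕ) < m
      · by_cases h2 : (j : ℕ) < m'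
        · split_ifs <;> omega
        · have hz : b (i, j) = 0 := hc (i, j) h1 (show m' ≤ (j : ℕ) by omega)
          split_ifs <;> simp [hz]
      · split_ifs <;> omega
    omega

lemma distrib_apply' (u : Fin d → ℕ) (γ : Fin n →₀ ℕ) (p : Fin d × Fin n) :
    distrib n d u γ p = min (pref u ((p.1 : ℕ) + 1)) (pref ⇑γ ((p.2 : ℕ) + 1))
      - max (pref u (p.1 : ℕ)) (pref ⇑γ (p.2 : ℕ)) := by
  rw [distrib_apply, Finset.Ico_inter_Ico, Nat.card_Ico]

lemma sorted_eq_distrib {b : (Fin d × Fin n) →₀ ℕ}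
    (hb : ∀ p q : Fin d × Fin n, (p.1 : ℕ) < (q.1 : ℕ) → (q.2 : ℕ) < (p.2 : ℕ) →
      b p = 0 ∨ b q = 0) :
    b = distrib n d (rowF b) (colF b) := by
  ext p
  obtain ⟨i, j⟩ := p
  rw [distrib_apply']
  show b (i, j) = min (pref (rowF b) ((i : ℕ) + 1)) (pref ⇑(colF b) ((j : ℕ) + 1))
      - max (pref (rowF b) (i : ℕ)) (pref ⇑(colF b) (j : ℕ))
  rw [← Pa_n b ((i : ℕ) + 1), ← Pa_n b (i : ℕ), ← Pa_d b ((j : ℕ) + 1), ← Pa_d b (j : ℕ)]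
  have h11 := Pa_eq_min hb (i : ℕ) (j : ℕ)
  have h21 := Pa_eq_min hb ((i : ℕ) + 1) (j : ℕ)
  have h12 := Pa_eq_min hb (i : ℕ) ((j : ℕ) + 1)
  have h22 := Pa_eq_min hb ((i : ℕ) + 1) ((j : ℕ) + 1)
  have hrect := Pa_rect b i j
  have m1 : Pa b (i : ℕ) n ≤ Pa b ((i : ℕ) + 1) n := Pa_mono b (by omega) le_rfl
  have m2 : Pa b d (j : ℕ) ≤ Pa b d ((j : ℕ) + 1) := Pa_mono b le_rfl (by omega)
  omega

end A3
section A4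
variable {n d : ℕ}

def gwt (d : ℕ) (p : Fin d × Fin n) : ℕ := (d - (p.1 : ℕ)) * (p.2 : ℕ)

def Mw (b : (Fin d × Fin n) →₀ ℕ) : ℕ := b.sum fun p v => v * gwt d p

lemma Mw_add (x y : (Fin d × Fin n) →₀ ℕ) : Mw (x + y) = Mw x + Mw y :=
  Finsupp.sum_add_index (by simp) (by intros; ring)

lemma Mw_single (p : Fin d × Fin n) (c : ℕ) : Mw (Finsupp.single p c) = c * gwt d p :=
  Finsupp.sum_single_index (by simp)

lemma row_single (i i0 : Fin d) (j : Fin n) (c : ℕ) :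
    ∑ j' : Fin n, (Finsupp.single (i, j) c) (i0, j') = if i = i0 then c else 0 := by
  simp [Finsupp.single_apply, Prod.mk.injEq, ite_and, Finset.sum_ite_eq]

lemma col_single (i : Fin d) (j j0 : Fin n) (c : ℕ) :
    ∑ i' : Fin d, (Finsupp.single (i, j) c) (i', j0) = if j = j0 then c else 0 := by
  by_cases h : j = j0
  · subst h
    simp [Finsupp.single_apply, Prod.mk.injEq, ite_and, Finset.sum_ite_eq]
  · simp [Finsupp.single_apply, Prod.mk.injEq, ite_and, h]

lemma key_aux : ∀ N : ℕ, ∀ b : (Fin d × Fin n) →₀ ℕ, Mw b < N →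
    (monomial b 1 : MvPolynomial (Fin d × Fin n) ℂ)
      - monomial (distrib n d (rowF b) (colF b)) 1 ∈ IR n d := by
  intro N
  induction N with
  | zero => exact fun b h => absurd h (Nat.not_lt_zero _)
  | succ N ih =>
    intro b hb
    by_cases hs : ∀ p q : Fin d × Fin n, (p.1 : ℕ) < (q.1 : ℕ) → (q.2 : ℕ) < (p.2 : ℕ) →
        b p = 0 ∨ b q = 0
    · rw [← sorted_eq_distrib hs, sub_self]
      exact Ideal.zero_mem _
    · push_neg at hs
      obtain ⟨p, q, hpq1, hpq2, hbp, hbq⟩ := hs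
      obtain ⟨i, j⟩ := p
      obtain ⟨k, l⟩ := q
      simp only at hpq1 hpq2 hbp hbq
      set c0 : (Fin d × Fin n) →₀ ℕ :=
        b - Finsupp.single (i, j) 1 - Finsupp.single (k, l) 1 with hc0
      have hbeq : b = c0 + Finsupp.single (i, j) 1 + Finsupp.single (k, l) 1 := by
        ext r
        simp only [hc0, Finsupp.add_apply, Finsupp.tsub_apply, Finsupp.single_apply]
        by_cases h1 : (i, j) = r
        · have h2 : ¬ (k, l) = r := by
            intro h2
            rw [← h1] at h2
            have := congrArg (fun x : Fin d × Fin n => (x.1 : ℕ)) h2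
            simp only at this
            omega
          subst h1
          simp only [if_pos rfl, if_neg h2]
          split_ifs <;> omega
        · by_cases h2 : (k, l) = r
          · subst h2
            simp only [if_pos rfl, if_neg h1]
            split_ifs <;> omega
          · simp only [if_neg h1, if_neg h2]
            omega
      set b' : (Fin d × Fin n) →₀ ℕ :=
        c0 + Finsupp.single (i, l) 1 + Finsupp.single (k, j) 1 with hb'
      have hrow : rowF b' = rowF b := by
        funext i0
        unfold rowF
        conv_rhs => rw [hbeq]
        rw [hb']
        simp only [Finsupp.add_apply, Finset.sum_add_distrib, row_single]
      have hcol : colF b' = colF b := by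
        ext j0
        simp only [colF, Finsupp.coe_equivFunOnFinite_symm]
        conv_rhs => rw [hbeq]
        rw [hb']
        simp only [Finsupp.add_apply, Finset.sum_add_distrib, col_single]
        split_ifs <;> omega
      have hmono : ∀ (e : (Fin d × Fin n) →₀ ℕ) (r s : Fin d × Fin n),
          (monomial (e + Finsupp.single r 1 + Finsupp.single s 1) (1 : ℂ)
            : MvPolynomial (Fin d × Fin n) ℂ) = monomial e 1 * (X r * X s) := by
        intro e r s
        rw [X, X, monomial_mul, monomial_mul, add_assoc]
        ring_nf
      have hdiff : (monomial b 1 : MvPolynomial (Fin d × Fin n) ℂ) - monomial b' 1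
          ∈ IR n d := by
        rw [hbeq, hb', hmono, hmono, ← mul_sub]
        refine Ideal.mul_mem_left _ _ ?_
        have hg : (X (i, l) * X (k, j) - X (i, j) * X (k, l)
            : MvPolynomial (Fin d × Fin n) ℂ) ∈ IR n d :=
          Ideal.subset_span ⟨i, k, l, j, by exact hpq1, by exact hpq2, rfl⟩
        have := neg_mem hg
        simpa using this
      have hlt : Mw b' < N := by
        have hMb : Mw b = Mw c0 + gwt d (i, j) + gwt d (k, l) := by
          rw [hbeq, Mw_add, Mw_add, Mw_single, Mw_single]
          ring
        have hMb' : Mw b' = Mw c0 + gwt d (i, l) + gwt d (k, j) := by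
          rw [hb', Mw_add, Mw_add, Mw_single, Mw_single]
          ring
        have hglt : gwt d (i, l) + gwt d (k, j) < gwt d (i, j) + gwt d (k, l) := by
          unfold gwt
          simp only
          have hkd : (k : ℕ) < d := k.isLt
          obtain ⟨s, hs⟩ : ∃ s, d - (i : ℕ) = (d - (k : ℕ)) + s + 1 :=
            ⟨d - (i : ℕ) - (d - (k : ℕ)) - 1, by omega⟩
          obtain ⟨t, ht⟩ : ∃ t, (j : ℕ) = (l : ℕ) + t + 1 := ⟨(j : ℕ) - (l : ℕ) - 1, by omega⟩
          rw [hs, ht]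
          ring_nf
          nlinarith [Nat.zero_le ((d - (k : ℕ)) * (l : ℕ))]
        omega
      have hfin := ih b' hlt
      rw [hrow, hcol] at hfin
      have : (monomial b 1 : MvPolynomial (Fin d × Fin n) ℂ)
          - monomial (distrib n d (rowF b) (colF b)) 1
          = ((monomial b 1 : MvPolynomial (Fin d × Fin n) ℂ) - monomial b' 1)
            + (monomial b' 1 - monomial (distrib n d (rowF b) (colF b)) 1) := by ring
      rw [this]
      exact Ideal.add_mem _ hdiff hfin

end A4
section A5
variable {n d : ℕ}

lemma weight_wS (b : (Fin d × Fin n) →₀ ℕ) :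
    Finsupp.weight (fun p : Fin d × Fin n => (Pi.single p.1 1 : Fin d → ℕ)) b = rowF b := by
  funext i
  rw [Finsupp.weight_apply, Finsupp.sum_fintype _ _ (fun p => by simp)]
  rw [Finset.sum_apply]
  have h1 : ∀ p : Fin d × Fin n,
      (b p • (Pi.single p.1 1 : Fin d → ℕ)) i = if i = p.1 then b p else 0 := by
    intro p
    rw [Pi.smul_apply, Pi.single_apply]
    split_ifs <;> simp
  rw [Finset.sum_congr rfl fun p _ => h1 p, Fintype.sum_prod_type]
  have h2 : ∀ i' : Fin d, (∑ j' : Fin n, if i = (i', j').1 then b (i', j') else 0)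
      = if i = i' then ∑ j' : Fin n, b (i', j') else 0 := by
    intro i'
    by_cases h : i = i'
    · simp [h]
    · simp [h]
  rw [Finset.sum_congr rfl fun i' _ => h2 i', Finset.sum_ite_eq Finset.univ i
    (fun i' => ∑ j' : Fin n, b (i', j'))]
  simp [rowF]

lemma weight_one (γ : Fin n →₀ ℕ) : Finsupp.weight (1 : Fin n → ℕ) γ = ∑ j, γ j := by
  rw [Finsupp.weight_apply, Finsupp.sum_fintype _ _ (fun p => by simp)]
  simp

lemma mapDomain_snd (b : (Fin d × Fin n) →₀ ℕ) :
    Finsupp.mapDomain Prod.snd b = colF b := by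
  ext j
  rw [Finsupp.mapDomain, Finsupp.sum_apply, Finsupp.sum_fintype _ _ (fun p => by simp)]
  simp only [Finsupp.single_apply]
  rw [Fintype.sum_prod_type]
  simp only [colF, Finsupp.coe_equivFunOnFinite_symm]
  refine Finset.sum_congr rfl fun i' _ => ?_
  rw [Finset.sum_ite_eq' Finset.univ j (fun j' => b (i', j'))]
  simp

lemma piAlg_eq : piAlg n d = rename (Prod.snd : Fin d × Fin n → Fin n) := by
  apply MvPolynomial.algHom_ext
  intro p
  simp [piAlg]

lemma piL_monomial (b : (Fin d × Fin n) →₀ ℕ) (c : ℂ) :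
    piL n d (monomial b c) = monomial (colF b) c := by
  show piAlg n d (monomial b c) = _
  rw [piAlg_eq, rename_monomial, mapDomain_snd]

lemma psi_monomial (u : Fin d → ℕ) (γ : Fin n →₀ ℕ) (c : ℂ) :
    psi n d u (monomial γ c) = monomial (distrib n d u γ) c := by
  rw [← single_eq_monomial, ← single_eq_monomial]
  exact AddMonoidAlgebra.mapDomainLinearMap_single (R := ℂ) _ _ _

lemma sum_colF (b : (Fin d × Fin n) →₀ ℕ) : ∑ j, colF b j = ∑ i, rowF b i := by
  simp only [colF, rowF, Finsupp.coe_equivFunOnFinite_symm]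
  exact (Finset.sum_comm).symm

lemma rowF_distrib_eq {u : Fin d → ℕ} {γ : Fin n →₀ ℕ} (hsum : ∑ i, u i = ∑ j, γ j) :
    rowF (distrib n d u γ) = u := by
  funext i
  exact row_distrib u γ hsum i

lemma colF_distrib_eq {u : Fin d → ℕ} {γ : Fin n →₀ ℕ} (hsum : ∑ i, u i = ∑ j, γ j) :
    colF (distrib n d u γ) = γ := by
  ext j
  simp only [colF, Finsupp.coe_equivFunOnFinite_symm]
  exact col_distrib u γ hsum j

lemma straighten {u : Fin d → ℕ} {x : MvPolynomial (Fin d × Fin n) ℂ}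
    (hx : x ∈ Scomp n d u) : x - psi n d u (piL n d x) ∈ IR n d := by
  have hrepr := (support_sum_monomial_coeff x).symm
  have hx' : x.IsWeightedHomogeneous (fun p : Fin d × Fin n => (Pi.single p.1 1 : Fin d → ℕ)) u := hx
  rw [hrepr]
  rw [map_sum (piL n d), Finset.sum_congr rfl fun b _ => piL_monomial b (coeff b x),
    map_sum (psi n d u), Finset.sum_congr rfl fun b _ => psi_monomial u (colF b) (coeff b x),
    ← Finset.sum_sub_distrib]
  refine Submodule.sum_mem _ fun b hb => ?_
  have hrow : rowF b = u := by
    rw [← weight_wS]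
    exact hx' (mem_support_iff.1 hb)
  have hc : (monomial b (coeff b x) : MvPolynomial (Fin d × Fin n) ℂ)
      - monomial (distrib n d u (colF b)) (coeff b x)
      = C (coeff b x) * ((monomial b 1 : MvPolynomial (Fin d × Fin n) ℂ)
        - monomial (distrib n d u (colF b)) 1) := by
    rw [mul_sub, C_mul_monomial, C_mul_monomial, mul_one]
  rw [hc, ← hrow]
  exact Ideal.mul_mem_left _ _ (key_aux (Mw b + 1) b (Nat.lt_succ_self _))

lemma psi_mem_Scomp {u : Fin d → ℕ} {f : MvPolynomial (Fin n) ℂ}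
    (hf : f ∈ Vcomp n (∑ i, u i)) : psi n d u f ∈ Scomp n d u := by
  have hrepr := (support_sum_monomial_coeff f).symm
  have hf' : f.IsHomogeneous (∑ i, u i) := hf
  rw [hrepr]
  rw [map_sum (psi n d u)]
  refine Submodule.sum_mem _ fun γ hγ => ?_
  rw [psi_monomial]
  refine isWeightedHomogeneous_monomial _ _ _ ?_
  rw [weight_wS, rowF_distrib_eq]
  rw [← weight_one]
  exact (hf' (mem_support_iff.1 hγ)).symm

lemma piL_mem_Vcomp {u : Fin d → ℕ} {x : MvPolynomial (Fin d × Fin n) ℂ}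
    (hx : x ∈ Scomp n d u) : piL n d x ∈ Vcomp n (∑ i, u i) := by
  have hrepr := (support_sum_monomial_coeff x).symm
  have hx' : x.IsWeightedHomogeneous (fun p : Fin d × Fin n => (Pi.single p.1 1 : Fin d → ℕ)) u := hx
  rw [hrepr]
  rw [map_sum (piL n d)]
  refine Submodule.sum_mem _ fun b hb => ?_
  rw [piL_monomial]
  refine isWeightedHomogeneous_monomial _ _ _ ?_
  rw [weight_one, sum_colF]
  have hrow : rowF b = u := by
    rw [← weight_wS]
    exact hx' (mem_support_iff.1 hb)
  rw [hrow]

lemma pi_psi {u : Fin d → ℕ} {f : MvPolynomial (Fin n) ℂ}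
    (hf : f ∈ Vcomp n (∑ i, u i)) : piL n d (psi n d u f) = f := by
  have hrepr := (support_sum_monomial_coeff f).symm
  have hf' : f.IsHomogeneous (∑ i, u i) := hf
  rw [hrepr]
  rw [map_sum (psi n d u), map_sum (piL n d)]
  refine Finset.sum_congr rfl fun γ hγ => ?_
  rw [psi_monomial, piL_monomial, colF_distrib_eq]
  rw [← weight_one]
  exact (hf' (mem_support_iff.1 hγ)).symm

end A5
section A6
variable {n d : ℕ}

variable (I : Ideal (MvPolynomial (Fin n) ℂ))

lemma IR_le_Upsilon : Submodule.restrictScalars ℂ (IR n d) ≤ Upsilon n d I := le_sup_left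

lemma psi_piece_le (u : Fin d → ℕ) :
    Submodule.map (psi n d u) (restrictScalars ℂ I ⊓ Vcomp n (∑ i, u i)) ≤ Upsilon n d I :=
  le_trans (le_iSup (fun u : Fin d → ℕ =>
    Submodule.map (psi n d u) (restrictScalars ℂ I ⊓ Vcomp n (∑ i, u i))) u) le_sup_right

lemma piL_IR {x : MvPolynomial (Fin d × Fin n) ℂ} (hx : x ∈ IR n d) : piL n d x = 0 := by
  have hle : IR n d ≤ RingHom.ker (piAlg n d).toRingHom := by
    rw [IR, Ideal.span_le]
    rintro q ⟨i, k, j, l, hik, hjl, rfl⟩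
    simp only [SetLike.mem_coe, RingHom.mem_ker, AlgHom.toRingHom_eq_coe, RingHom.coe_coe,
      map_sub, map_mul, piAlg, aeval_X]
    ring
  exact hle hx

lemma Upsilon_le_comap : Upsilon n d I ≤ Submodule.comap (piL n d) (restrictScalars ℂ I) := by
  apply sup_le
  · intro x hx
    simp only [Submodule.mem_comap, Submodule.restrictScalars_mem]
    rw [piL_IR hx]
    exact I.zero_mem
  · apply iSup_le
    intro u
    rw [Submodule.map_le_iff_le_comap]
    intro f hf
    simp only [Submodule.mem_comap, Submodule.restrictScalars_mem]
    rw [pi_psi hf.2]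
    exact hf.1

lemma mem_Upsilon_of {u : Fin d → ℕ} {x : MvPolynomial (Fin d × Fin n) ℂ}
    (hx : x ∈ Scomp n d u) (hpi : piL n d x ∈ I) : x ∈ Upsilon n d I := by
  have h1 : x - psi n d u (piL n d x) ∈ IR n d := straighten hx
  have h2 : psi n d u (piL n d x) ∈ Upsilon n d I :=
    psi_piece_le I u ⟨piL n d x, ⟨hpi, piL_mem_Vcomp hx⟩, rfl⟩
  have h3 := add_mem (IR_le_Upsilon I h1) h2
  simpa using h3

lemma X_mul_Upsilon (q : Fin d × Fin n) {x : MvPolynomial (Fin d × Fin n) ℂ}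
    (hx : x ∈ Upsilon n d I) : X q * x ∈ Upsilon n d I := by
  obtain ⟨a, ha, b, hb, rfl⟩ := Submodule.mem_sup.1 hx
  rw [mul_add]
  refine add_mem (IR_le_Upsilon I (Ideal.mul_mem_left _ _ ha)) ?_
  refine Submodule.iSup_induction _ (motive := fun y => X q * y ∈ Upsilon n d I) hb ?_ ?_ ?_
  · rintro u y ⟨f, hf, rfl⟩
    refine mem_Upsilon_of I (u := Pi.single q.1 1 + u) ?_ ?_
    · have h1 : (X q : MvPolynomial (Fin d × Fin n) ℂ) ∈ Scomp n d (Pi.single q.1 1) :=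
        isWeightedHomogeneous_X _ _ _
      exact IsWeightedHomogeneous.mul h1 (psi_mem_Scomp hf.2)
    · have hmul : piL n d (X q * psi n d u f) = piAlg n d (X q) * piAlg n d (psi n d u f) :=
        map_mul (piAlg n d) _ _
      rw [hmul]
      have h2 : piAlg n d (psi n d u f) = f := pi_psi hf.2
      rw [h2]
      simp only [piAlg, aeval_X]
      exact Ideal.mul_mem_left _ _ hf.1
  · show X q * 0 ∈ Upsilon n d I
    rw [mul_zero]
    exact zero_mem _
  · intro y z hy hz
    rw [mul_add]
    exact add_mem hy hz

lemma mul_mem_Upsilon (s x : MvPolynomial (Fin d × Fin n) ℂ) (hx : x ∈ Upsilon n d I) :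
    s * x ∈ Upsilon n d I := by
  induction s using MvPolynomial.induction_on generalizing x with
  | C a => rw [C_mul']; exact smul_mem _ _ hx
  | add p q hp hq => rw [add_mul]; exact add_mem (hp x hx) (hq x hx)
  | mul_X p q hp => rw [mul_assoc]; exact hp _ (X_mul_Upsilon I q hx)

lemma Upsilon_graded : Upsilon n d I = ⨆ u : Fin d → ℕ, Upsilon n d I ⊓ Scomp n d u := by
  classical
  apply le_antisymm
  · apply sup_le
    · letI 𝒜 : (Fin d → ℕ) → Submodule ℂ (MvPolynomial (Fin d × Fin n) ℂ) :=
        weightedHomogeneousSubmodule ℂ (fun p : Fin d × Fin n => Pi.single p.1 1)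
      letI : GradedAlgebra 𝒜 :=
        weightedGradedAlgebra ℂ (fun p : Fin d × Fin n => Pi.single p.1 1)
      have hhom : (IR n d).IsHomogeneous 𝒜 := by
        apply Ideal.homogeneous_span
        rintro g ⟨i, k, j, l, hik, hjl, rfl⟩
        refine ⟨Pi.single (i : Fin d) 1 + Pi.single k 1, ?_⟩
        refine sub_mem ?_ ?_
        · exact IsWeightedHomogeneous.mul (isWeightedHomogeneous_X _ _ _)
            (isWeightedHomogeneous_X _ _ _)
        · exact IsWeightedHomogeneous.mul (isWeightedHomogeneous_X _ _ _)
            (isWeightedHomogeneous_X _ _ _)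
      intro x hx
      rw [← DirectSum.sum_support_decompose 𝒜 x]
      refine Submodule.sum_mem _ fun u _ => ?_
      refine le_iSup (fun u => Upsilon n d I ⊓ Scomp n d u) u ?_
      exact ⟨IR_le_Upsilon I (hhom u hx), SetLike.coe_mem _⟩
    · apply iSup_le
      intro u
      refine le_trans (le_inf (psi_piece_le I u) ?_)
        (le_iSup (fun u => Upsilon n d I ⊓ Scomp n d u) u)
      rintro y ⟨f, hf, rfl⟩
      exact psi_mem_Scomp hf.2
  · exact iSup_le fun u => inf_le_left

lemma Upsilon_dim (φ : ℕ → ℕ)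
    (hHF : ∀ a : ℕ, finrank ℂ (Vcomp n a ⧸
      Submodule.comap (Vcomp n a).subtype (restrictScalars ℂ I)) = φ a)
    (u : Fin d → ℕ) :
    finrank ℂ (Scomp n d u ⧸
      Submodule.comap (Scomp n d u).subtype (Upsilon n d I)) = φ (∑ i, u i) := by
  set N := ∑ i, u i with hN
  let pr : Scomp n d u →ₗ[ℂ] Vcomp n N :=
    (piL n d).restrict (fun x hx => piL_mem_Vcomp hx)
  let Φ := (Submodule.mkQ (Submodule.comap (Vcomp n N).subtype (restrictScalars ℂ I))).comp pr
  have hker : LinearMap.ker Φ = Submodule.comap (Scomp n d u).subtype (Upsilon n d I) := by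
    ext x
    simp only [Φ, LinearMap.mem_ker, LinearMap.comp_apply, Submodule.mkQ_apply,
      Submodule.Quotient.mk_eq_zero, Submodule.mem_comap, Submodule.restrictScalars_mem,
      Submodule.coe_subtype]
    have hval : ((pr x : Vcomp n N) : MvPolynomial (Fin n) ℂ) = piL n d (x : _) := rfl
    rw [hval]
    constructor
    · intro h
      exact mem_Upsilon_of I x.2 h
    · intro h
      exact Upsilon_le_comap I h
  have hsurj : Function.Surjective Φ := by
    intro y
    obtain ⟨g, rfl⟩ := Submodule.mkQ_surjective _ y
    refine ⟨⟨psi n d u (g : MvPolynomial (Fin n) ℂ), psi_mem_Scomp g.2⟩, ?_⟩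
    simp only [Φ, LinearMap.comp_apply, Submodule.mkQ_apply]
    congr 1
    apply Subtype.ext
    show piL n d (psi n d u (g : MvPolynomial (Fin n) ℂ)) = (g : MvPolynomial (Fin n) ℂ)
    exact pi_psi g.2
  rw [← hker, ← hHF N]
  exact (LinearMap.quotKerEquivOfSurjective Φ hsurj).finrank_eq

end A6

/-- Proposition 4.1: if `I ⊆ V` is a homogeneous ideal with Hilbert
function `φ`, then `Υ(I)` is a `ℤ^d`-homogeneous ideal of `S` and
`dim (S/Υ(I))_u = φ(|u|)` for all `u`. -/
theorem stmt_5 (n d : ℕ) (hn : 0 < n) (hd : 0 < d) (φ : ℕ → ℕ)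
    (I : Ideal (MvPolynomial (Fin n) ℂ)) (hhom : IsHomogV n I)
    (hHF : ∀ a : ℕ, finrank ℂ (Vcomp n a ⧸
      Submodule.comap (Vcomp n a).subtype (restrictScalars ℂ I)) = φ a) :
    (∀ s x : MvPolynomial (Fin d × Fin n) ℂ,
        x ∈ Upsilon n d I → s * x ∈ Upsilon n d I) ∧
      (Upsilon n d I = ⨆ u : Fin d → ℕ, Upsilon n d I ⊓ Scomp n d u) ∧
      (∀ u : Fin d → ℕ, finrank ℂ (Scomp n d u ⧸
        Submodule.comap (Scomp n d u).subtype (Upsilon n d I)) = φ (∑ i, u i)) := by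
  refine ⟨fun s x hx => mul_mem_Upsilon I s x hx, Upsilon_graded I,
    fun u => Upsilon_dim I φ hHF u⟩


end BorderComon
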